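/- Let D₁, C₁ ⊆ F₂ⁿ and D₂, C₂ ⊆ F₂ᵐ. Then (D₁ × D₂, C₁ × C₂) is a poly-tiling of F₂ⁿ × F₂ᵐ ≅ F₂^{n+m} if and only if (D₁, C₁) is a poly-tiling of F₂ⁿ and (D₂, C₂) is a poly-tiling of F₂ᵐ. -/
import Mathlib
open Set Function

set_option linter.unusedSectionVars false

section Helpers
variable {α β : Type*} [Fintype α] [Fintype β] [DecidableEq α] [DecidableEq β]

lemma elim_comp_eq (w : (α ⊕ β) → ZMod 2) :
    Sum.elim (fun i => w (Sum.inl i)) (fun j => w (Sum.inr j)) = w := by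
  funext x; cases x <;> rfl

lemma mem_image2_elim {D₁ : Set (α → ZMod 2)} {D₂ : Set (β → ZMod 2)}
    {w : (α ⊕ β) → ZMod 2} :
    w ∈ Set.image2 (fun u v => Sum.elim u v) D₁ D₂ ↔
      (fun i => w (Sum.inl i)) ∈ D₁ ∧ (fun j => w (Sum.inr j)) ∈ D₂ := by
  constructor
  · rintro ⟨u, hu, v, hv, rfl⟩; exact ⟨hu, hv⟩
  · rintro ⟨h1, h2⟩; exact ⟨_, h1, _, h2, elim_comp_eq w⟩

lemma elim_add (a u : α → ZMod 2) (b v : β → ZMod 2) :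
    Sum.elim a b + Sum.elim u v = Sum.elim (a + u) (b + v) := by
  funext x; cases x <;> rfl

lemma hd_sum (w w' : (α ⊕ β) → ZMod 2) :
    hammingDist w w' = hammingDist (fun i => w (Sum.inl i)) (fun i => w' (Sum.inl i))
      + hammingDist (fun j => w (Sum.inr j)) (fun j => w' (Sum.inr j)) := by
  simp [hammingDist, Finset.card_filter, Fintype.sum_sum_type]

lemma hd_elim (a a' : α → ZMod 2) (b b' : β → ZMod 2) :
    hammingDist (Sum.elim a b) (Sum.elim a' b') = hammingDist a a' + hammingDist b b' :=
  hd_sum _ _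

lemma hd_path_le (f : ℕ → (α → ZMod 2)) (k : ℕ) :
    hammingDist (f 0) (f k) ≤ ∑ i ∈ Finset.range k, hammingDist (f i) (f (i + 1)) := by
  induction k with
  | zero => simp
  | succ k ih =>
      rw [Finset.sum_range_succ]
      exact le_trans (hammingDist_triangle _ (f k) _) (Nat.add_le_add_right ih _)

end Helpers

open Set Function

/-- A weight on a binary vector space `ι → ZMod 2`. -/
def IsWeight {ι : Type*} (ω : (ι → ZMod 2) → ℝ) : Prop :=
  (∀ x, 0 ≤ ω x) ∧ (∀ x, ω x = 0 ↔ x = 0) ∧ ∀ x y, ω (x + y) ≤ ω x + ω y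

/-- A function respects the support of vectors. -/
def RespectsSupport {ι : Type*} (ω : (ι → ZMod 2) → ℝ) : Prop :=
  ∀ x y : ι → ZMod 2, Function.support x ⊆ Function.support y → ω x ≤ ω y

/-- A TS-metric: a (translation-invariant) metric determined by a weight
that respects support, i.e. `d x y = ω (x + y)` (note `-y = y` in char 2). -/
def IsTSMetric {ι : Type*} (d : (ι → ZMod 2) → (ι → ZMod 2) → ℝ) : Prop :=
  ∃ ω, IsWeight ω ∧ RespectsSupport ω ∧ ∀ x y, d x y = ω (x + y)

/-- The ball `B_d(x, r)`. -/
def tsBall {ι : Type*} (d : (ι → ZMod 2) → (ι → ZMod 2) → ℝ) (x : ι → ZMod 2) (r : ℝ) :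
    Set (ι → ZMod 2) := {y | d x y ≤ r}

/-- `(D, C)` is a tiling: the translates `c + D`, `c ∈ C`, are pairwise disjoint
and cover the whole space. -/
def IsTiling {ι : Type*} (D C : Set (ι → ZMod 2)) : Prop :=
  (⋃ c ∈ C, (c + ·) '' D) = Set.univ ∧
  C.Pairwise fun c c' => Disjoint ((c + ·) '' D) ((c' + ·) '' D)

/-- `C` is a `(d, r)`-perfect code: the balls of radius `r` centered at codewords
are pairwise disjoint and cover the whole space. -/
def IsPerfectCode {ι : Type*} (d : (ι → ZMod 2) → (ι → ZMod 2) → ℝ) (r : ℝ)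
    (C : Set (ι → ZMod 2)) : Prop :=
  (⋃ c ∈ C, tsBall d c r) = Set.univ ∧
  C.Pairwise fun c c' => Disjoint (tsBall d c r) (tsBall d c' r)

/-- A polyhedromino: any two points of `D` are joined by a geodesic path
(w.r.t. the Hamming distance) lying inside `D`. -/
def IsPolyhedromino {ι : Type*} [Fintype ι] (D : Set (ι → ZMod 2)) : Prop :=
  ∀ x ∈ D, ∀ y ∈ D, ∃ γ : ℕ → (ι → ZMod 2),
    γ 0 = x ∧ γ (hammingDist x y) = y ∧
    (∀ i ≤ hammingDist x y, γ i ∈ D) ∧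
    ∀ i < hammingDist x y, hammingDist (γ i) (γ (i + 1)) = 1

/-- A poly-tiling: a tiling whose tile is a polyhedromino. -/
def IsPolyTiling {ι : Type*} [Fintype ι] (D C : Set (ι → ZMod 2)) : Prop :=
  IsTiling D C ∧ IsPolyhedromino D

/-- The vector `e_i` with support `{i}`. -/
def unitVec {ι : Type*} [DecidableEq ι] (i : ι) : ι → ZMod 2 := Pi.single i 1

/-- The `F`-combinatorial weight: the minimal number of members of `F` needed
to cover the support of `x`. -/
noncomputable def combWeight {ι : Type*} [DecidableEq ι] (F : Finset (Finset ι))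
    (x : ι → ZMod 2) : ℕ :=
  sInf {k | ∃ A : Finset (Finset ι), A ⊆ F ∧ A.card = k ∧ Function.support x ⊆ ↑(A.sup id)}

/-- The axioms of a metric. -/
def IsMetric {α : Type*} (d : α → α → ℝ) : Prop :=
  (∀ x y, d x y = 0 ↔ x = y) ∧ (∀ x y, d x y = d y x) ∧ ∀ x y z, d x z ≤ d x y + d y z

/-- The max-metric on the product (concatenation) space, identified with
functions on `Fin n ⊕ Fin m`. -/
def dmax {n m : ℕ} (d₁ : (Fin n → ZMod 2) → (Fin n → ZMod 2) → ℝ)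
    (d₂ : (Fin m → ZMod 2) → (Fin m → ZMod 2) → ℝ)
    (w w' : Fin n ⊕ Fin m → ZMod 2) : ℝ :=
  max (d₁ (fun i => w (Sum.inl i)) (fun i => w' (Sum.inl i)))
      (d₂ (fun j => w (Sum.inr j)) (fun j => w' (Sum.inr j)))

/-- `(D₁ × D₂, C₁ × C₂)` is a poly-tiling of `F₂^{n+m}` (as functions on
`Fin n ⊕ Fin m`) iff `(D₁, C₁)` and `(D₂, C₂)` are poly-tilings of `F₂ⁿ` and `F₂ᵐ`. -/
theorem stmt_17 {n m : ℕ} (D₁ C₁ : Set (Fin n → ZMod 2)) (D₂ C₂ : Set (Fin m → ZMod 2)) :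
    IsPolyTiling
        (Set.image2 (fun (u : Fin n → ZMod 2) (v : Fin m → ZMod 2) => Sum.elim u v) D₁ D₂)
        (Set.image2 (fun (u : Fin n → ZMod 2) (v : Fin m → ZMod 2) => Sum.elim u v) C₁ C₂) ↔
      IsPolyTiling D₁ C₁ ∧ IsPolyTiling D₂ C₂ := by
  constructor
  · rintro ⟨⟨hcov, hdisj⟩, hpoly⟩
    have hcovP : ∀ w : Fin n ⊕ Fin m → ZMod 2,
        ∃ c ∈ Set.image2 (fun (u : Fin n → ZMod 2) (v : Fin m → ZMod 2) => Sum.elim u v) C₁ C₂,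
          ∃ d ∈ Set.image2 (fun (u : Fin n → ZMod 2) (v : Fin m → ZMod 2) => Sum.elim u v) D₁ D₂,
            c + d = w := by
      intro w
      have hw : w ∈ (⋃ c ∈ Set.image2
          (fun (u : Fin n → ZMod 2) (v : Fin m → ZMod 2) => Sum.elim u v) C₁ C₂,
          (c + ·) '' Set.image2
            (fun (u : Fin n → ZMod 2) (v : Fin m → ZMod 2) => Sum.elim u v) D₁ D₂) := by
        rw [hcov]; trivial
      rw [Set.mem_iUnion₂] at hw
      obtain ⟨c, hc, d, hd, hcd⟩ := hw
      exact ⟨c, hc, d, hd, hcd⟩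
    obtain ⟨c0, hc0, d0, hd0, -⟩ := hcovP 0
    obtain ⟨hc01, hc02⟩ := mem_image2_elim.mp hc0
    obtain ⟨hd01, hd02⟩ := mem_image2_elim.mp hd0
    refine ⟨⟨⟨?_, ?_⟩, ?_⟩, ⟨?_, ?_⟩, ?_⟩
    · -- cover₁
      apply Set.eq_univ_of_forall
      intro x
      obtain ⟨c, hc, d, hd, hcd⟩ := hcovP (Sum.elim x 0)
      rw [Set.mem_iUnion₂]
      refine ⟨_, (mem_image2_elim.mp hc).1, _, (mem_image2_elim.mp hd).1, ?_⟩
      funext i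
      exact congrFun hcd (Sum.inl i)
    · -- disj₁
      intro c₁ h1 c₁' h1' hne
      rw [Set.disjoint_left]
      rintro x ⟨u, hu, rfl⟩ ⟨u', hu', hx'⟩
      have hnee : Sum.elim c₁ (fun j => c0 (Sum.inr j)) ≠
          Sum.elim c₁' (fun j => c0 (Sum.inr j)) := by
        intro h; exact hne (funext fun i => congrFun h (Sum.inl i))
      have hdd : Disjoint
          ((Sum.elim c₁ (fun j => c0 (Sum.inr j)) + ·) ''
            Set.image2 (fun (u : Fin n → ZMod 2) (v : Fin m → ZMod 2) => Sum.elim u v) D₁ D₂)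
          ((Sum.elim c₁' (fun j => c0 (Sum.inr j)) + ·) ''
            Set.image2 (fun (u : Fin n → ZMod 2) (v : Fin m → ZMod 2) => Sum.elim u v) D₁ D₂) :=
        hdisj (Set.mem_image2_of_mem h1 hc02) (Set.mem_image2_of_mem h1' hc02) hnee
      have hx'' : c₁' + u' = c₁ + u := hx'
      have hm1 : Sum.elim (c₁ + u) ((fun j => c0 (Sum.inr j)) + fun j => d0 (Sum.inr j)) ∈
          ((Sum.elim c₁ (fun j => c0 (Sum.inr j)) + ·) ''
            Set.image2 (fun (u : Fin n → ZMod 2) (v : Fin m → ZMod 2) => Sum.elim u v) D₁ D₂) :=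
        ⟨Sum.elim u (fun j => d0 (Sum.inr j)), Set.mem_image2_of_mem hu hd02,
          elim_add _ _ _ _⟩
      have hm2 : Sum.elim (c₁ + u) ((fun j => c0 (Sum.inr j)) + fun j => d0 (Sum.inr j)) ∈
          ((Sum.elim c₁' (fun j => c0 (Sum.inr j)) + ·) ''
            Set.image2 (fun (u : Fin n → ZMod 2) (v : Fin m → ZMod 2) => Sum.elim u v) D₁ D₂) :=
        ⟨Sum.elim u' (fun j => d0 (Sum.inr j)), Set.mem_image2_of_mem hu' hd02,
          (elim_add _ _ _ _).trans (by rw [hx''])⟩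
      exact Set.disjoint_left.mp hdd hm1 hm2
    · -- poly₁
      intro u hu u' hu'
      obtain ⟨γ, hγ0, hγt, hγmem, hγstep⟩ :=
        hpoly (Sum.elim u (fun j => d0 (Sum.inr j))) (Set.mem_image2_of_mem hu hd02)
          (Sum.elim u' (fun j => d0 (Sum.inr j))) (Set.mem_image2_of_mem hu' hd02)
      have ht : hammingDist (Sum.elim u (fun j => d0 (Sum.inr j)))
          (Sum.elim u' (fun j => d0 (Sum.inr j))) = hammingDist u u' := by
        simp [hd_elim]
      rw [ht] at hγt hγmem hγstep
      set t := hammingDist u u' with hteq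
      set f : ℕ → Fin n → ZMod 2 := fun i j => γ i (Sum.inl j) with hfdef
      set g : ℕ → Fin m → ZMod 2 := fun i j => γ i (Sum.inr j) with hgdef
      have hf0 : f 0 = u := by funext j; simp [hfdef, hγ0]
      have hft : f t = u' := by funext j; simp [hfdef, hγt]
      have hstep1 : ∀ i < t, hammingDist (f i) (f (i+1)) + hammingDist (g i) (g (i+1)) = 1 := by
        intro i hi
        rw [← hd_sum]
        exact hγstep i hi
      have hle1 : ∀ i < t, hammingDist (f i) (f (i+1)) ≤ 1 := fun i hi =>
        le_trans (Nat.le_add_right _ _) (le_of_eq (hstep1 i hi))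
      have hsum_ge : t ≤ ∑ i ∈ Finset.range t, hammingDist (f i) (f (i+1))  := by
        have := hd_path_le f t
        rwa [hf0, hft] at this
      have hall : ∀ i < t, hammingDist (f i) (f (i+1)) = 1 := by
        by_contra hcon
        push_neg at hcon
        obtain ⟨i, hi, hnei⟩ := hcon
        have hlt : hammingDist (f i) (f (i+1)) < 1 := lt_of_le_of_ne (hle1 i hi) hnei
        have hslt : ∑ i ∈ Finset.range t, hammingDist (f i) (f (i+1)) <
            ∑ _i ∈ Finset.range t, 1 :=
          Finset.sum_lt_sum (fun j hj => hle1 j (Finset.mem_range.mp hj))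
            ⟨i, Finset.mem_range.mpr hi, hlt⟩
        simp only [Finset.sum_const, Finset.card_range, smul_eq_mul, mul_one] at hslt
        omega
      exact ⟨f, hf0, hft, fun i hi => (mem_image2_elim.mp (hγmem i hi)).1, hall⟩
    · -- cover₂
      apply Set.eq_univ_of_forall
      intro x
      obtain ⟨c, hc, d, hd, hcd⟩ := hcovP (Sum.elim 0 x)
      rw [Set.mem_iUnion₂]
      refine ⟨_, (mem_image2_elim.mp hc).2, _, (mem_image2_elim.mp hd).2, ?_⟩
      funext j
      exact congrFun hcd (Sum.inr j)
    · -- disj₂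
      intro c₂ h2 c₂' h2' hne
      rw [Set.disjoint_left]
      rintro x ⟨v, hv, rfl⟩ ⟨v', hv', hx'⟩
      have hnee : Sum.elim (fun i => c0 (Sum.inl i)) c₂ ≠
          Sum.elim (fun i => c0 (Sum.inl i)) c₂' := by
        intro h; exact hne (funext fun j => congrFun h (Sum.inr j))
      have hdd : Disjoint
          ((Sum.elim (fun i => c0 (Sum.inl i)) c₂ + ·) ''
            Set.image2 (fun (u : Fin n → ZMod 2) (v : Fin m → ZMod 2) => Sum.elim u v) D₁ D₂)
          ((Sum.elim (fun i => c0 (Sum.inl i)) c₂' + ·) ''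
            Set.image2 (fun (u : Fin n → ZMod 2) (v : Fin m → ZMod 2) => Sum.elim u v) D₁ D₂) :=
        hdisj (Set.mem_image2_of_mem hc01 h2) (Set.mem_image2_of_mem hc01 h2') hnee
      have hx'' : c₂' + v' = c₂ + v := hx'
      have hm1 : Sum.elim ((fun i => c0 (Sum.inl i)) + fun i => d0 (Sum.inl i)) (c₂ + v) ∈
          ((Sum.elim (fun i => c0 (Sum.inl i)) c₂ + ·) ''
            Set.image2 (fun (u : Fin n → ZMod 2) (v : Fin m → ZMod 2) => Sum.elim u v) D₁ D₂) :=
        ⟨Sum.elim (fun i => d0 (Sum.inl i)) v, Set.mem_image2_of_mem hd01 hv,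
          elim_add _ _ _ _⟩
      have hm2 : Sum.elim ((fun i => c0 (Sum.inl i)) + fun i => d0 (Sum.inl i)) (c₂ + v) ∈
          ((Sum.elim (fun i => c0 (Sum.inl i)) c₂' + ·) ''
            Set.image2 (fun (u : Fin n → ZMod 2) (v : Fin m → ZMod 2) => Sum.elim u v) D₁ D₂) :=
        ⟨Sum.elim (fun i => d0 (Sum.inl i)) v', Set.mem_image2_of_mem hd01 hv',
          (elim_add _ _ _ _).trans (by rw [hx''])⟩
      exact Set.disjoint_left.mp hdd hm1 hm2
    · -- poly₂
      intro v hv v' hv'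
      obtain ⟨γ, hγ0, hγt, hγmem, hγstep⟩ :=
        hpoly (Sum.elim (fun i => d0 (Sum.inl i)) v) (Set.mem_image2_of_mem hd01 hv)
          (Sum.elim (fun i => d0 (Sum.inl i)) v') (Set.mem_image2_of_mem hd01 hv')
      have ht : hammingDist (Sum.elim (fun i => d0 (Sum.inl i)) v)
          (Sum.elim (fun i => d0 (Sum.inl i)) v') = hammingDist v v' := by
        simp [hd_elim]
      rw [ht] at hγt hγmem hγstep
      set t := hammingDist v v' with hteq
      set f : ℕ → Fin m → ZMod 2 := fun i j => γ i (Sum.inr j) with hfdef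
      set g : ℕ → Fin n → ZMod 2 := fun i j => γ i (Sum.inl j) with hgdef
      have hf0 : f 0 = v := by funext j; simp [hfdef, hγ0]
      have hft : f t = v' := by funext j; simp [hfdef, hγt]
      have hstep1 : ∀ i < t, hammingDist (g i) (g (i+1)) + hammingDist (f i) (f (i+1)) = 1 := by
        intro i hi
        rw [← hd_sum]
        exact hγstep i hi
      have hle1 : ∀ i < t, hammingDist (f i) (f (i+1)) ≤ 1 := fun i hi =>
        le_trans (Nat.le_add_left _ _) (le_of_eq (hstep1 i hi))
      have hsum_ge : t ≤ ∑ i ∈ Finset.range t, hammingDist (f i) (f (i+1))  := by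
        have := hd_path_le f t
        rwa [hf0, hft] at this
      have hall : ∀ i < t, hammingDist (f i) (f (i+1)) = 1 := by
        by_contra hcon
        push_neg at hcon
        obtain ⟨i, hi, hnei⟩ := hcon
        have hlt : hammingDist (f i) (f (i+1)) < 1 := lt_of_le_of_ne (hle1 i hi) hnei
        have hslt : ∑ i ∈ Finset.range t, hammingDist (f i) (f (i+1)) <
            ∑ _i ∈ Finset.range t, 1 :=
          Finset.sum_lt_sum (fun j hj => hle1 j (Finset.mem_range.mp hj))
            ⟨i, Finset.mem_range.mpr hi, hlt⟩
        simp only [Finset.sum_const, Finset.card_range, smul_eq_mul, mul_one] at hslt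
        omega
      exact ⟨f, hf0, hft, fun i hi => (mem_image2_elim.mp (hγmem i hi)).2, hall⟩
  · rintro ⟨⟨⟨hcov₁, hdis₁⟩, hpoly₁⟩, ⟨hcov₂, hdis₂⟩, hpoly₂⟩
    refine ⟨⟨?_, ?_⟩, ?_⟩
    · -- cover
      apply Set.eq_univ_of_forall
      intro w
      obtain ⟨c₁, hc₁, u, hu, hcu⟩ :
          ∃ c₁ ∈ C₁, ∃ u ∈ D₁, c₁ + u = (fun i => w (Sum.inl i)) := by
        have hx : (fun i => w (Sum.inl i)) ∈ ⋃ c ∈ C₁, (c + ·) '' D₁ := by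
          rw [hcov₁]; trivial
        rw [Set.mem_iUnion₂] at hx
        obtain ⟨c, hc, d, hd, hcd⟩ := hx
        exact ⟨c, hc, d, hd, hcd⟩
      obtain ⟨c₂, hc₂, v, hv, hcv⟩ :
          ∃ c₂ ∈ C₂, ∃ v ∈ D₂, c₂ + v = (fun j => w (Sum.inr j)) := by
        have hx : (fun j => w (Sum.inr j)) ∈ ⋃ c ∈ C₂, (c + ·) '' D₂ := by
          rw [hcov₂]; trivial
        rw [Set.mem_iUnion₂] at hx
        obtain ⟨c, hc, d, hd, hcd⟩ := hx
        exact ⟨c, hc, d, hd, hcd⟩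
      rw [Set.mem_iUnion₂]
      refine ⟨Sum.elim c₁ c₂, Set.mem_image2_of_mem hc₁ hc₂,
        Sum.elim u v, Set.mem_image2_of_mem hu hv, ?_⟩
      show Sum.elim c₁ c₂ + Sum.elim u v = w
      rw [elim_add, hcu, hcv]
      exact elim_comp_eq w
    · -- disjoint
      rintro c ⟨c₁, hc₁, c₂, hc₂, rfl⟩ c' ⟨c₁', hc₁', c₂', hc₂', rfl⟩ hne
      rw [Set.disjoint_left]
      rintro w ⟨d, ⟨u, hu, v, hv, rfl⟩, rfl⟩ ⟨d', ⟨u', hu', v', hv', rfl⟩, heq⟩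
      have h1 : c₁' + u' = c₁ + u := funext fun i => congrFun heq (Sum.inl i)
      have h2 : c₂' + v' = c₂ + v := funext fun j => congrFun heq (Sum.inr j)
      by_cases hc : c₁ = c₁'
      · have hc2 : c₂ ≠ c₂' := fun h => hne (by rw [hc, h])
        exact Set.disjoint_left.mp (hdis₂ hc₂ hc₂' hc2) ⟨v, hv, rfl⟩ ⟨v', hv', h2⟩
      · exact Set.disjoint_left.mp (hdis₁ hc₁ hc₁' hc) ⟨u, hu, rfl⟩ ⟨u', hu', h1⟩
    · -- polyhedromino
      rintro x ⟨u, hu, v, hv, rfl⟩ y ⟨u', hu', v', hv', rfl⟩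
      obtain ⟨γ₁, h10, h1t, h1mem, h1step⟩ := hpoly₁ u hu u' hu'
      obtain ⟨γ₂, h20, h2t, h2mem, h2step⟩ := hpoly₂ v hv v' hv'
      set t₁ := hammingDist u u' with ht1
      set t₂ := hammingDist v v' with ht2
      have hT : hammingDist (Sum.elim u v) (Sum.elim u' v') = t₁ + t₂ := hd_elim u u' v v'
      rw [hT]
      refine ⟨fun i => if i ≤ t₁ then Sum.elim (γ₁ i) v else Sum.elim u' (γ₂ (i - t₁)),
        ?_, ?_, ?_, ?_⟩
      · simp [h10]
      · dsimp only
        rcases Nat.eq_zero_or_pos t₂ with h | h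
        · have hvv : v' = v := by rw [← h2t, h, h20]
          simp [h, h1t, hvv]
        · have hng : ¬ (t₁ + t₂ ≤ t₁) := by omega
          rw [if_neg hng, Nat.add_sub_cancel_left, h2t]
      · intro i hi
        dsimp only
        by_cases hle : i ≤ t₁
        · rw [if_pos hle]
          exact Set.mem_image2_of_mem (h1mem i hle) hv
        · rw [if_neg hle]
          exact Set.mem_image2_of_mem hu' (h2mem (i - t₁) (by omega))
      · intro i hi
        dsimp only
        rcases lt_trichotomy i t₁ with h | h | h
        · rw [if_pos h.le, if_pos (by omega : i + 1 ≤ t₁), hd_elim, h1step i h, hammingDist_self]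
        · have e1 : i + 1 - t₁ = 1 := by omega
          rw [if_pos h.le, if_neg (by omega : ¬ i + 1 ≤ t₁), e1, hd_elim]
          have hg1 : γ₁ i = u' := by rw [h, h1t]
          rw [hg1, hammingDist_self, zero_add, ← h20]
          exact h2step 0 (by omega)
        · have e : i + 1 - t₁ = (i - t₁) + 1 := by omega
          rw [if_neg (by omega : ¬ i ≤ t₁), if_neg (by omega : ¬ i + 1 ≤ t₁), e, hd_elim,
            hammingDist_self, h2step (i - t₁) (by omega), zero_add]
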